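/- Let a, b be integers with a ≥ b ≥ 1, gcd(a,b) = 1, and a² + 4b not a perfect square, let β be a root of x² = ax + b, K = ℚ(β), and 𝓞 the ring of integers of K. Then every prime number p dividing b splits in K: there exist distinct prime ideals P ≠ Q of 𝓞 with p·𝓞 = P·Q. -/

import Mathlib

open NumberField Polynomial Module

/-- Let `a ≥ b ≥ 1` with `gcd(a,b) = 1` and `a² + 4b` not a perfect square, and let
`β` be a root of `x² = ax + b` generating the (real quadratic) number field
`K = ℚ(β)`. Then every prime `p ∣ b` splits in `K`: `p𝓞 = P·Q` with `P ≠ Q` prime. -/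
theorem prime_dividing_b_splits (a b : ℤ) (hba : b ≤ a) (hb : 1 ≤ b)
    (hgcd : Int.gcd a b = 1) (hsq : ¬ ∃ n : ℤ, n ^ 2 = a ^ 2 + 4 * b)
    (K : Type*) [Field K] [NumberField K] (β : K)
    (hroot : β ^ 2 = (a : K) * β + (b : K))
    (hgen : IntermediateField.adjoin ℚ ({β} : Set K) = ⊤) :
    ∀ p : ℕ, p.Prime → (p : ℤ) ∣ b →
      ∃ P Q : Ideal (𝓞 K), P ≠ Q ∧ P.IsPrime ∧ Q.IsPrime ∧
        Ideal.span ({(p : 𝓞 K)} : Set (𝓞 K)) = P * Q := by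
  intro p hp hpb
  -- `p` does not divide `a`
  have hpa : ¬ (p : ℤ) ∣ a := by
    intro h
    have h1 : (p : ℤ) ∣ (Int.gcd a b : ℤ) := by exact_mod_cast Int.dvd_gcd h hpb
    rw [hgcd] at h1
    exact hp.one_lt.ne' (by exact_mod_cast Int.eq_one_of_dvd_one (by norm_num) h1)
  -- β is integral over ℤ
  have hβint : IsIntegral ℤ β := by
    refine ⟨X ^ 2 - C a * X - C b, by monicity!, ?_⟩
    simp only [eval₂_sub, eval₂_mul, eval₂_X_pow, eval₂_X, eval₂_C]
    simp only [eq_intCast]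
    linear_combination hroot
  -- the minimal polynomial of β over ℚ
  set f : ℚ[X] := X ^ 2 - C (a : ℚ) * X - C (b : ℚ) with hf
  have hfm : f.Monic := by rw [hf]; monicity!
  have hfd : f.natDegree = 2 := by rw [hf]; compute_degree!
  have haev : aeval β f = 0 := by
    rw [hf]
    simp only [map_sub, map_mul, map_pow, aeval_X, aeval_C, eq_ratCast]
    push_cast
    linear_combination hroot
  have hfirr : Irreducible f := by
    rw [hfm.irreducible_iff_roots_eq_zero_of_degree_le_three (by omega) (by omega)]
    rw [Multiset.eq_zero_iff_forall_notMem]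
    intro q hq
    rw [mem_roots hfm.ne_zero] at hq
    have hq' : q ^ 2 = (a : ℚ) * q + (b : ℚ) := by
      have := hq
      simp only [hf, IsRoot.def, eval_sub, eval_mul, eval_pow, eval_X, eval_C] at this
      linarith [this]
    have hqint : IsIntegral ℤ q := by
      refine ⟨X ^ 2 - C a * X - C b, by monicity!, ?_⟩
      simp only [eval₂_sub, eval₂_mul, eval₂_X_pow, eval₂_X, eval₂_C]
      simp only [eq_intCast]
      linear_combination hq'
    obtain ⟨n, hn⟩ := IsIntegrallyClosed.isIntegral_iff.mp hqint
    have hn' : (n : ℚ) = q := by exact_mod_cast hn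
    rw [← hn'] at hq'
    have hz : n ^ 2 = a * n + b := by exact_mod_cast hq'
    exact hsq ⟨2 * n - a, by ring_nf; linarith [hz]⟩
  have hmin : minpoly ℚ β = f := (minpoly.eq_of_irreducible_of_monic hfirr haev hfm).symm
  have hβℚ : IsIntegral ℚ β := hβint.tower_top
  -- power basis and trace of β
  let pb0 := IntermediateField.adjoin.powerBasis hβℚ
  let e : (IntermediateField.adjoin ℚ ({β} : Set K)) ≃ₐ[ℚ] K :=
    (IntermediateField.equivOfEq hgen).trans IntermediateField.topEquiv
  let pb : PowerBasis ℚ K := pb0.map e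
  have hpbgen : pb.gen = β := rfl
  have htrβ : Algebra.trace ℚ K β = (a : ℚ) := by
    have := pb.trace_gen_eq_nextCoeff_minpoly
    rw [hpbgen, hmin] at this
    rw [this, hf]
    have h2 : (X ^ 2 - C (a:ℚ) * X - C (b:ℚ)).natDegree = 2 := by compute_degree!
    rw [nextCoeff, h2]
    simp only [coeff_sub, coeff_C_mul, coeff_X_pow, coeff_C, coeff_X_one]
    norm_num
  have hrank : finrank ℚ K = 2 := by
    rw [pb.finrank, PowerBasis.map_dim, IntermediateField.adjoin.powerBasis_dim, hmin, hfd]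
  -- the element β as an integer
  set β' : 𝓞 K := ⟨β, hβint⟩ with hβ'
  have hcoeβ : (algebraMap (𝓞 K) K) β' = β := rfl
  have hroot' : β' ^ 2 = (a : 𝓞 K) * β' + (b : 𝓞 K) := by
    apply RingOfIntegers.coe_injective
    rw [map_pow, map_add, map_mul, map_intCast, map_intCast, hcoeβ, hroot]
  obtain ⟨b', hb'⟩ := hpb
  have hbcast : (b : 𝓞 K) = (p : 𝓞 K) * (b' : 𝓞 K) := by
    exact_mod_cast congrArg (Int.cast : ℤ → 𝓞 K) hb'
  -- the two ideals
  set P : Ideal (𝓞 K) := Ideal.span {(p : 𝓞 K), β'} with hP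
  set Q : Ideal (𝓞 K) := Ideal.span {(p : 𝓞 K), β' - (a : 𝓞 K)} with hQ
  -- a Bezout relation
  have hcop : IsCoprime ((p : ℤ)) a :=
    (Prime.coprime_iff_not_dvd (Int.prime_iff_natAbs_prime.mpr (by simpa))).mpr hpa
  obtain ⟨u, v, huv⟩ := hcop
  -- the product is (p)
  have hPQ : Ideal.span ({(p : 𝓞 K)} : Set (𝓞 K)) = P * Q := by
    apply le_antisymm
    · rw [Ideal.span_le, Set.singleton_subset_iff]
      have m1 : β' * (p : 𝓞 K) ∈ P * Q :=
        Ideal.mul_mem_mul (Ideal.subset_span (by simp)) (Ideal.subset_span (by simp))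
      have m2 : (p : 𝓞 K) * (β' - (a : 𝓞 K)) ∈ P * Q :=
        Ideal.mul_mem_mul (Ideal.subset_span (by simp)) (Ideal.subset_span (by simp))
      have m3 : (p : 𝓞 K) * (p : 𝓞 K) ∈ P * Q :=
        Ideal.mul_mem_mul (Ideal.subset_span (by simp)) (Ideal.subset_span (by simp))
      have m4 : (a : 𝓞 K) * (p : 𝓞 K) = β' * (p : 𝓞 K) - (p : 𝓞 K) * (β' - (a : 𝓞 K)) := by
        ring
      have m5 : (a : 𝓞 K) * (p : 𝓞 K) ∈ P * Q := by rw [m4]; exact sub_mem m1 m2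
      have key : (p : 𝓞 K) =
          (u : 𝓞 K) * ((p : 𝓞 K) * (p : 𝓞 K)) + (v : 𝓞 K) * ((a : 𝓞 K) * (p : 𝓞 K)) := by
        have h0 : ((u * p + v * a : ℤ) : 𝓞 K) = 1 := by rw [huv]; norm_num
        push_cast at h0
        linear_combination (-(p : 𝓞 K)) * h0
      rw [key]
      exact add_mem (Ideal.mul_mem_left _ _ m3) (Ideal.mul_mem_left _ _ m5)
    · rw [Ideal.mul_le]
      intro r hr s hs
      rw [hP, Ideal.mem_span_pair] at hr
      rw [hQ, Ideal.mem_span_pair] at hs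
      obtain ⟨u1, v1, h1⟩ := hr
      obtain ⟨u2, v2, h2⟩ := hs
      rw [Ideal.mem_span_singleton]
      refine ⟨u1 * u2 * (p : 𝓞 K) + u1 * v2 * (β' - (a : 𝓞 K)) + u2 * v1 * β'
          + v1 * v2 * (b' : 𝓞 K), ?_⟩
      rw [← h1, ← h2]
      linear_combination (v1 * v2) * hroot' + (v1 * v2) * hbcast
  -- P is proper
  have hPne : P ≠ ⊤ := by
    intro htop
    have h1 : (1 : 𝓞 K) ∈ P := htop ▸ Submodule.mem_top
    rw [hP, Ideal.mem_span_pair] at h1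
    obtain ⟨u1, v1, h1⟩ := h1
    set γ : 𝓞 K := u1 * (β' - (a : 𝓞 K)) + v1 * (b' : 𝓞 K) with hγ
    have key : β' - (a : 𝓞 K) = (p : 𝓞 K) * γ := by
      rw [hγ]
      linear_combination (-(β' - (a : 𝓞 K))) * h1 + v1 * hroot' + v1 * hbcast
    have keyK : β - (a : K) = (p : K) * (algebraMap (𝓞 K) K γ) := by
      have h2 := congrArg (algebraMap (𝓞 K) K) key
      rwa [map_sub, map_mul, map_natCast, map_intCast, hcoeβ] at h2
    obtain ⟨m, hm⟩ := IsIntegrallyClosed.isIntegral_iff.mp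
      (Algebra.isIntegral_trace (R := ℤ) (L := ℚ) (γ.isIntegral_coe))
    have htr : Algebra.trace ℚ K (β - (a : K)) = -(a : ℚ) := by
      rw [map_sub, htrβ, (map_intCast (algebraMap ℚ K) a).symm.trans
        (by norm_cast), Algebra.trace_algebraMap, hrank]
      push_cast
      ring
    have htr2 : Algebra.trace ℚ K ((p : K) * (algebraMap (𝓞 K) K γ)) = (p : ℚ) * (m : ℚ) := by
      rw [(map_natCast (algebraMap ℚ K) p).symm,
        ← Algebra.smul_def, map_smul, smul_eq_mul, ← hm, eq_intCast]
    have hfin : -(a : ℚ) = (p : ℚ) * (m : ℚ) := by rw [← htr, keyK, htr2]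
    have hfin' : -a = (p : ℤ) * m := by exact_mod_cast hfin
    exact hpa ⟨-m, by rw [mul_neg, ← hfin', neg_neg]⟩
  -- Q is proper
  have hQne : Q ≠ ⊤ := by
    intro htop
    have h1 : (1 : 𝓞 K) ∈ Q := htop ▸ Submodule.mem_top
    rw [hQ, Ideal.mem_span_pair] at h1
    obtain ⟨u2, v2, h2⟩ := h1
    set γ : 𝓞 K := u2 * β' + v2 * (b' : 𝓞 K) with hγ
    have key : β' = (p : 𝓞 K) * γ := by
      rw [hγ]
      linear_combination (-β') * h2 + v2 * hroot' + v2 * hbcast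
    have keyK : β = (p : K) * (algebraMap (𝓞 K) K γ) := by
      have h3 := congrArg (algebraMap (𝓞 K) K) key
      rwa [map_mul, map_natCast, hcoeβ] at h3
    obtain ⟨m, hm⟩ := IsIntegrallyClosed.isIntegral_iff.mp
      (Algebra.isIntegral_trace (R := ℤ) (L := ℚ) (γ.isIntegral_coe))
    have htr2 : Algebra.trace ℚ K ((p : K) * (algebraMap (𝓞 K) K γ)) = (p : ℚ) * (m : ℚ) := by
      rw [(map_natCast (algebraMap ℚ K) p).symm,
        ← Algebra.smul_def, map_smul, smul_eq_mul, ← hm, eq_intCast]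
    have hfin : (a : ℚ) = (p : ℚ) * (m : ℚ) := by rw [← htrβ, keyK, htr2]
    have hfin' : a = (p : ℤ) * m := by exact_mod_cast hfin
    exact hpa ⟨m, hfin'⟩
  -- P ≠ Q
  have hne : P ≠ Q := by
    intro h
    apply hPne
    rw [Ideal.eq_top_iff_one]
    have hβ'P : β' ∈ P := Ideal.subset_span (by simp)
    have hβ'aP : β' - (a : 𝓞 K) ∈ P := by rw [h]; exact Ideal.subset_span (by simp)
    have haP : (a : 𝓞 K) ∈ P := by
      have := sub_mem hβ'P hβ'aP; simpa using this
    have hpP : (p : 𝓞 K) ∈ P := Ideal.subset_span (by simp)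
    have h1 : ((u * p + v * a : ℤ) : 𝓞 K) ∈ P := by
      push_cast
      exact add_mem (Ideal.mul_mem_left _ _ hpP) (Ideal.mul_mem_left _ _ haP)
    rw [huv] at h1
    simpa using h1
  -- norms
  have hNp : Ideal.absNorm (Ideal.span ({(p : 𝓞 K)} : Set (𝓞 K))) = p ^ 2 := by
    rw [Ideal.absNorm_span_singleton,
      (map_natCast (algebraMap ℤ (𝓞 K)) p).symm,
      Algebra.norm_algebraMap_of_basis (Module.Free.chooseBasis ℤ (𝓞 K)),
      ← Module.finrank_eq_card_chooseBasisIndex, RingOfIntegers.rank, hrank]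
    rw [Int.natAbs_pow]
    simp
  have hmul : Ideal.absNorm P * Ideal.absNorm Q = p ^ 2 := by
    have hmm : Ideal.absNorm (P * Q) = Ideal.absNorm P * Ideal.absNorm Q :=
      _root_.map_mul Ideal.absNorm P Q
    rw [← hmm, ← hPQ]
    exact hNp
  have hp2pos : 0 < p ^ 2 := pow_pos hp.pos 2
  have hNP1 : Ideal.absNorm P ≠ 1 := fun h => hPne (Ideal.absNorm_eq_one_iff.mp h)
  have hNQ1 : Ideal.absNorm Q ≠ 1 := fun h => hQne (Ideal.absNorm_eq_one_iff.mp h)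
  have hNP : Ideal.absNorm P = p := by
    obtain ⟨k, hk, hkeq⟩ := (Nat.dvd_prime_pow hp).mp ⟨_, hmul.symm⟩
    interval_cases k
    · rw [pow_zero] at hkeq; exact absurd hkeq hNP1
    · simpa using hkeq
    · exfalso
      apply hNQ1
      have h3 : p ^ 2 * Ideal.absNorm Q = p ^ 2 := hkeq ▸ hmul
      exact Nat.eq_of_mul_eq_mul_left hp2pos (h3.trans (mul_one _).symm)
  have hNQ : Ideal.absNorm Q = p := by
    rw [hNP] at hmul
    have h4 : p * Ideal.absNorm Q = p * p := by rw [hmul, pow_two]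
    exact Nat.eq_of_mul_eq_mul_left hp.pos h4
  have hPpr : P.IsPrime :=
    Ideal.isPrime_of_irreducible_absNorm (by rw [hNP]; exact hp.prime.irreducible)
  have hQpr : Q.IsPrime :=
    Ideal.isPrime_of_irreducible_absNorm (by rw [hNQ]; exact hp.prime.irreducible)
  exact ⟨P, Q, hne, hPpr, hQpr, hPQ⟩
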